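/- arXiv:2604.21565 — 5 statements merged into one kernel-verified Lean document; each statement's English description precedes it below -/
import Mathlib

section
/- Let B > 0 and let T be a real number with 0 < T < 1/(2B). If f, g : ℝ → ℂ are continuous integrable functions whose Fourier transforms vanish outside the interval [−B, B], and f(nT) = g(nT) for every integer n, then f = g. (Nyquist–Shannon sampling theorem: a signal containing no frequencies higher than B Hz is completely determined by samples spaced less than 1/(2B) apart.) -/
open MeasureTheory
open scoped FourierTransform

open Real in
/-- Auxiliary lemma: a continuous integrable band-limited function vanishing at all
sampling points is identically zero. -/
lemma nyquist_aux
    (B T : ℝ) (hB : 0 < B) (hT0 : 0 < T) (hT : T < 1 / (2 * B))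
    (h : ℝ → ℂ) (hhc : Continuous h) (hhi : Integrable h)
    (hFB : ∀ ξ : ℝ, B < |ξ| → 𝓕 h ξ = 0)
    (hsamp : ∀ n : ℤ, h (n * T) = 0) : ∀ x, h x = 0 := by
  set p : ℝ := 1 / T with hp_def
  have hp : 0 < p := by positivity
  have hBp : B < p / 2 := by
    have h2B : 0 < 2 * B := by positivity
    have : T * (2 * B) < (1 / (2 * B)) * (2 * B) := by
      exact mul_lt_mul_of_pos_right hT h2B
    rw [one_div_mul_cancel h2B.ne'] at this
    have hT' : 2 * B < 1 / T := by
      rw [lt_div_iff₀ hT0]; linarith [this]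
    simp only [hp_def]; linarith
  set F : ℝ → ℂ := 𝓕 h with hF_def
  have hFc : Continuous F :=
    VectorFourier.fourierIntegral_continuous Real.continuous_fourierChar
      (by exact continuous_inner) hhi
  have hsupp : ∀ ξ : ℝ, ξ ∉ Set.Icc (-B) B → F ξ = 0 := by
    intro ξ hξ
    apply hFB
    simp only [Set.mem_Icc, not_and_or, not_le] at hξ
    rcases hξ with h1 | h1
    · rw [abs_of_neg (by linarith)]; linarith
    · rw [abs_of_pos (by linarith)]; exact h1
  have hFcs : HasCompactSupport F :=
    HasCompactSupport.intro isCompact_Icc hsupp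
  have hFi : Integrable F := hFc.integrable_of_hasCompactSupport hFcs
  have hinv : 𝓕⁻ F = h := hhc.fourierInv_fourier_eq hhi hFi
  haveI : Fact (0 < p) := ⟨hp⟩
  set a : ℝ := -(p / 2) with ha_def
  have hab : a + p = p / 2 := by simp only [ha_def]; ring
  have hFa : F a = 0 := by
    apply hsupp; simp only [ha_def, Set.mem_Icc, not_and_or, not_le]
    left; linarith
  have hFb : F (a + p) = 0 := by
    apply hsupp; rw [hab]; simp only [Set.mem_Icc, not_and_or, not_le]
    right; linarith
  set φ : AddCircle p → ℂ := AddCircle.liftIco p a F with hφ_def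
  have hφc : Continuous φ :=
    AddCircle.liftIco_continuous (by rw [hFa, hFb]) hFc.continuousOn
  -- all Fourier coefficients of φ vanish
  have hcoeff : ∀ n : ℤ, fourierCoeff φ n = 0 := by
    intro n
    rw [fourierCoeff_eq_intervalIntegral φ n a]
    have step1 : (∫ x in a..a + p, (fourier (-n) (x : AddCircle p)) • φ (x : ℝ))
        = ∫ x in a..a + p, (fourier (-n) (x : AddCircle p)) • F x := by
      rw [intervalIntegral.integral_of_le (by linarith : a ≤ a + p),
        intervalIntegral.integral_of_le (by linarith : a ≤ a + p),
        MeasureTheory.integral_Ioc_eq_integral_Ioo,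
        MeasureTheory.integral_Ioc_eq_integral_Ioo]
      refine setIntegral_congr_fun measurableSet_Ioo fun x hx => ?_
      rw [hφ_def, AddCircle.liftIco_coe_apply ⟨hx.1.le, hx.2⟩]
    have step2 : (∫ x in a..a + p, (fourier (-n) (x : AddCircle p)) • F x)
        = ∫ x : ℝ, (fourier (-n) (x : AddCircle p)) • F x := by
      apply intervalIntegral.integral_eq_integral_of_support_subset
      intro x hx
      have hFx : F x ≠ 0 := by
        intro hc
        simp only [Function.mem_support, hc, smul_zero, ne_eq, not_true_eq_false] at hx
      have hxmem : x ∈ Set.Icc (-B) B := by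
        by_contra hcon
        exact hFx (hsupp x hcon)
      constructor
      · simp only [ha_def]; linarith [hxmem.1]
      · rw [hab]; linarith [hxmem.2]
    have step3 : (∫ x : ℝ, (fourier (-n) (x : AddCircle p)) • F x)
        = 𝓕 F (n * T) := by
      rw [Real.fourier_real_eq_integral_exp_smul]
      congr 1
      funext x
      congr 1
      rw [fourier_coe_apply]
      congr 1
      have hpne : (p : ℂ) ≠ 0 := by
        simp only [ne_eq, Complex.ofReal_eq_zero]; exact hp.ne'
      rw [div_eq_iff hpne]
      push_cast
      rw [hp_def]
      push_cast
      have hTne : (T : ℂ) ≠ 0 := by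
        simp only [ne_eq, Complex.ofReal_eq_zero]; exact hT0.ne'
      field_simp
    have step4 : 𝓕 F (n * T) = h (-(n * T)) := by
      have := Real.fourierInv_eq_fourier_neg F (-(n * T))
      rw [neg_neg] at this
      rw [← this, hinv]
    have step5 : h (-(n * T)) = 0 := by
      have := hsamp (-n)
      push_cast at this ⊢
      rw [neg_mul] at this
      exact this
    rw [step1, step2, step3, step4, step5, smul_zero]
  -- hence φ = 0 everywhere
  have hφ0 : ∀ z : AddCircle p, φ z = 0 := by
    intro z
    set Φ : C(AddCircle p, ℂ) := ⟨φ, hφc⟩ with hΦ_def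
    have hcoeffΦ : ∀ n : ℤ, fourierCoeff (⇑Φ) n = 0 := hcoeff
    have hsum : Summable (fourierCoeff (⇑Φ)) := by
      simp only [funext hcoeffΦ]; exact summable_zero
    have := has_pointwise_sum_fourier_series_of_summable hsum z
    simp only [hcoeffΦ, zero_smul] at this
    have h0 : HasSum (fun _ : ℤ => (0 : ℂ)) 0 := hasSum_zero
    exact (this.unique h0)
  -- hence F = 0 everywhere
  have hF0 : ∀ ξ : ℝ, F ξ = 0 := by
    intro ξ
    by_cases hξ : ξ ∈ Set.Ico a (a + p)
    · have h1 : AddCircle.liftIco p a F (ξ : AddCircle p) = F ξ :=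
        AddCircle.liftIco_coe_apply hξ
      rw [← h1]
      exact hφ0 _
    · apply hFB
      simp only [Set.mem_Ico, not_and_or, not_le, not_lt] at hξ
      rcases hξ with h1 | h1
      · rw [abs_of_neg (by simp only [ha_def] at h1; linarith)]
        simp only [ha_def] at h1; linarith
      · rw [hab] at h1
        rw [abs_of_pos (by linarith)]; linarith
  -- conclude h = 0
  intro x
  rw [← hinv]
  simp only [Real.fourierInv_eq]
  simp [hF0]

/-- **Nyquist–Shannon sampling theorem**: a continuous integrable signal whose Fourier
transform vanishes outside `[-B, B]` is completely determined by its samples at spacing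
`T < 1/(2B)`. -/
theorem nyquist_shannon_sampling
    (B T : ℝ) (hB : 0 < B) (hT0 : 0 < T) (hT : T < 1 / (2 * B))
    (f g : ℝ → ℂ)
    (hfc : Continuous f) (hgc : Continuous g)
    (hfi : Integrable f) (hgi : Integrable g)
    (hfB : ∀ ξ : ℝ, B < |ξ| → 𝓕 f ξ = 0)
    (hgB : ∀ ξ : ℝ, B < |ξ| → 𝓕 g ξ = 0)
    (hsamp : ∀ n : ℤ, f (n * T) = g (n * T)) :
    f = g := by
  set h : ℝ → ℂ := fun x => f x - g x with hh_def
  have hsub : ∀ ξ : ℝ, 𝓕 h ξ = 𝓕 f ξ - 𝓕 g ξ := by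
    intro ξ
    simp only [Real.fourier_eq, hh_def]
    simp only [smul_sub]
    exact integral_sub ((Real.fourierIntegral_convergent_iff ξ).2 hfi)
      ((Real.fourierIntegral_convergent_iff ξ).2 hgi)
  have key : ∀ x, h x = 0 := by
    apply nyquist_aux B T hB hT0 hT h (hfc.sub hgc) (hfi.sub hgi)
    · intro ξ hξ
      rw [hsub ξ, hfB ξ hξ, hgB ξ hξ, sub_zero]
    · intro n
      simp only [hh_def, hsamp n, sub_self]
  funext x
  exact sub_eq_zero.mp (key x)
end

section
/- Let a, b, c ∈ ℝ with r := √(a² + b² + c²) > 0, and let U = exp(−(i/2)·(a·σz + b·σx + c·σy)). Then the transition probability from the ground state |0⟩ to the excited state |1⟩ satisfies |U_{1,0}|² = ((b² + c²)/r²) · sin²(r/2), where U_{1,0} denotes the entry of U in row 1, column 0 (rows and columns indexed by 0 and 1). -/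
noncomputable section

open Nat

lemma exp_of_sq (M : Matrix (Fin 2) (Fin 2) ℂ) (s : ℂ) (hs : s ≠ 0)
    (h : M * M = (-(s ^ 2)) • 1) :
    NormedSpace.exp M = Complex.cos s • 1 + (Complex.sin s / s) • M := by
  letI : SeminormedRing (Matrix (Fin 2) (Fin 2) ℂ) := Matrix.linftyOpSemiNormedRing
  letI : NormedRing (Matrix (Fin 2) (Fin 2) ℂ) := Matrix.linftyOpNormedRing
  letI : NormedAlgebra ℂ (Matrix (Fin 2) (Fin 2) ℂ) := Matrix.linftyOpNormedAlgebra
  have heven : ∀ k : ℕ, M ^ (2 * k) = ((-(s ^ 2)) ^ k) • 1 := by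
    intro k
    rw [pow_mul, sq, h, smul_pow, one_pow]
  have h1 : HasSum (fun n : ℕ => ((n ! : ℂ)⁻¹) • M ^ n) (NormedSpace.exp M) :=
    NormedSpace.exp_series_hasSum_exp' M
  have h2 : HasSum (fun n : ℕ => ((n ! : ℂ)⁻¹) • M ^ n)
      (Complex.cos s • 1 + (Complex.sin s / s) • M) := by
    refine HasSum.even_add_odd ?_ ?_
    · have := (Complex.hasSum_cos s).smul_const (1 : Matrix (Fin 2) (Fin 2) ℂ)
      convert this using 2 with k
      rw [heven k, smul_smul]
      congr 1
      rw [neg_pow, ← pow_mul]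
      field_simp
    · have := ((Complex.hasSum_sin s).div_const s).smul_const M
      convert this using 2 with k
      rw [pow_succ, heven k, smul_mul_assoc, one_mul, smul_smul]
      congr 1
      rw [neg_pow, ← pow_mul, pow_succ]
      conv_rhs => rw [div_right_comm, mul_div_assoc, mul_div_cancel_right₀ _ hs]
      ring
  exact h1.unique h2

def σx : Matrix (Fin 2) (Fin 2) ℂ := !![0, 1; 1, 0]
def σy : Matrix (Fin 2) (Fin 2) ℂ := !![0, -Complex.I; Complex.I, 0]
def σz : Matrix (Fin 2) (Fin 2) ℂ := !![1, 0; 0, -1]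

/-- For `U = exp(-(i/2)(a σz + b σx + c σy))` with `r = √(a² + b² + c²) > 0`, the
transition probability `|⟨1|U|0⟩|²` equals `((b² + c²)/r²) sin²(r/2)`. -/
theorem transition_probability (a b c r : ℝ)
    (hr : r = Real.sqrt (a ^ 2 + b ^ 2 + c ^ 2)) (hrpos : 0 < r)
    (U : Matrix (Fin 2) (Fin 2) ℂ)
    (hU : U = NormedSpace.exp
      ((-(Complex.I / 2)) • ((a : ℂ) • σz + (b : ℂ) • σx + (c : ℂ) • σy))) :
    ‖U 1 0‖ ^ 2 =
      ((b ^ 2 + c ^ 2) / r ^ 2) * Real.sin (r / 2) ^ 2 := by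
  have hr0 : (r : ℂ) ≠ 0 := by exact_mod_cast hrpos.ne'
  have hr2 : a ^ 2 + b ^ 2 + c ^ 2 = r ^ 2 := by
    rw [hr, Real.sq_sqrt (by positivity)]
  set M : Matrix (Fin 2) (Fin 2) ℂ :=
    (-(Complex.I / 2)) • ((a : ℂ) • σz + (b : ℂ) • σx + (c : ℂ) • σy) with hM
  have hM2 : M * M = (-(((r : ℂ) / 2) ^ 2)) • 1 := by
    rw [show (-(((r : ℂ) / 2) ^ 2)) = ((-(r ^ 2) / 4 : ℝ) : ℂ) by push_cast; ring]
    ext i j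
    fin_cases i <;> fin_cases j <;>
      simp [hM, σx, σy, σz, Matrix.mul_apply, Fin.sum_univ_two, Matrix.one_apply,
        Complex.ext_iff] <;>
      constructor <;>
      (try simp [← Complex.ofReal_pow]) <;>
      first
        | linear_combination (-(1:ℝ)/4) * hr2
        | linear_combination ((1:ℝ)/4) * hr2
        | ring
  have hs : ((r : ℂ) / 2) ≠ 0 := by simp [hr0]
  have hexp := exp_of_sq M ((r : ℂ) / 2) hs hM2
  have hU10 : U 1 0 = ((Real.sin (r / 2) / r : ℝ) : ℂ) * ((c : ℂ) - (b : ℂ) * Complex.I) := by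
    rw [hU, hexp]
    have hM10 : M 1 0 = -(Complex.I / 2) * ((b : ℂ) + (c : ℂ) * Complex.I) := by
      simp [hM, σx, σy, σz]
    simp only [Matrix.add_apply, Matrix.smul_apply, Matrix.one_apply, hM10]
    have hsin : Complex.sin ((r : ℂ) / 2) = ((Real.sin (r / 2) : ℝ) : ℂ) := by
      push_cast
      rfl
    rw [hsin]
    simp only [smul_eq_mul]
    norm_num
    field_simp
    linear_combination (-(Complex.sin ((r:ℂ) / 2) * (c:ℂ))) * Complex.I_sq
  rw [hU10, norm_mul, mul_pow, Complex.sq_norm, Complex.sq_norm]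
  have h1 : Complex.normSq ((Real.sin (r / 2) / r : ℝ) : ℂ) = (Real.sin (r / 2) / r) ^ 2 := by
    rw [Complex.normSq_ofReal]; ring
  have h2 : Complex.normSq ((c : ℂ) - (b : ℂ) * Complex.I) = c ^ 2 + b ^ 2 := by
    simp [Complex.normSq_apply]
    ring
  rw [h1, h2]
  field_simp
  ring
end
end

section
/- Rabi oscillation formula for a resonantly detuned square pulse: let δ, A₀ ∈ ℝ with (δ, A₀) ≠ (0,0), let T ≥ 0, and let U(T) = exp(−(i T/2)·(δ·σz + A₀·σx)). Then the transition probability from |0⟩ to |1⟩ is |U(T)_{1,0}|² = (A₀²/(A₀² + δ²)) · sin²(√(δ² + A₀²) · T / 2). -/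
noncomputable section

lemma exp_of_sq_s5 (A : Matrix (Fin 2) (Fin 2) ℂ) (z : ℂ) (hz : z ≠ 0)
    (hA : A * A = z ^ 2 • (1 : Matrix (Fin 2) (Fin 2) ℂ)) :
    NormedSpace.exp A
      = Complex.cosh z • (1 : Matrix (Fin 2) (Fin 2) ℂ) + (Complex.sinh z / z) • A := by
  have heven : ∀ k : ℕ, A ^ (2 * k) = z ^ (2 * k) • (1 : Matrix (Fin 2) (Fin 2) ℂ) := by
    intro k
    induction k with
    | zero => simp
    | succ n ih =>
      have : 2 * (n + 1) = 2 * n + 2 := by ring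
      rw [this, pow_add, ih, sq, hA, Matrix.smul_mul, Matrix.mul_smul, one_mul, smul_smul,
        ← pow_add]
  have hodd : ∀ k : ℕ, A ^ (2 * k + 1) = z ^ (2 * k) • A := by
    intro k
    rw [pow_succ, heven, smul_mul_assoc, one_mul]
  rw [NormedSpace.exp_eq_tsum ℂ]
  refine HasSum.tsum_eq ?_
  refine HasSum.even_add_odd ?_ ?_
  · have h1 : HasSum (fun k : ℕ => (z ^ (2 * k) / (((2 * k).factorial : ℕ) : ℂ)) •
        (1 : Matrix (Fin 2) (Fin 2) ℂ)) (Complex.cosh z • (1 : Matrix (Fin 2) (Fin 2) ℂ)) :=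
      (Complex.hasSum_cosh z).smul_const 1
    convert h1 using 2 with k
    · rfl
    rw [heven, smul_smul, div_eq_inv_mul]
  · have h1 : HasSum (fun k : ℕ => (z ^ (2 * k + 1) / (((2 * k + 1).factorial : ℕ) : ℂ) / z) • A)
        ((Complex.sinh z / z) • A) := ((Complex.hasSum_sinh z).div_const z).smul_const A
    convert h1 using 2 with k
    · rfl
    rw [hodd, smul_smul]
    congr 1
    rw [pow_succ, div_div, mul_div_mul_right _ _ hz, div_eq_mul_inv, mul_comm]

/-- **Rabi oscillation formula for a detuned square pulse**:
for `U(T) = exp(-(iT/2)(δ σz + A₀ σx))`, the transition probability is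
`|⟨1|U(T)|0⟩|² = (A₀²/(A₀² + δ²)) sin²(√(δ² + A₀²) T/2)`. -/
theorem rabi_square_pulse (δ A₀ : ℝ) (h : (δ, A₀) ≠ (0, 0)) (T : ℝ) (hT : 0 ≤ T)
    (U : Matrix (Fin 2) (Fin 2) ℂ)
    (hU : U = NormedSpace.exp
      ((-(Complex.I * T / 2)) • ((δ : ℂ) • σz + (A₀ : ℂ) • σx))) :
    ‖U 1 0‖ ^ 2 =
      (A₀ ^ 2 / (A₀ ^ 2 + δ ^ 2)) * Real.sin (Real.sqrt (δ ^ 2 + A₀ ^ 2) * T / 2) ^ 2 := by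
  have hsum : 0 < δ ^ 2 + A₀ ^ 2 := by
    rcases lt_or_eq_of_le (by positivity : (0:ℝ) ≤ δ ^ 2 + A₀ ^ 2) with h1 | h1
    · exact h1
    · exfalso
      have hδ : δ = 0 := by nlinarith [sq_nonneg δ, sq_nonneg A₀]
      have hA : A₀ = 0 := by nlinarith [sq_nonneg δ, sq_nonneg A₀]
      exact h (by simp [hδ, hA])
  set Ω : ℝ := Real.sqrt (δ ^ 2 + A₀ ^ 2) with hΩdef
  have hΩpos : 0 < Ω := Real.sqrt_pos.mpr hsum
  have hΩsq : (Ω : ℝ) ^ 2 = δ ^ 2 + A₀ ^ 2 := Real.sq_sqrt hsum.le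
  set A : Matrix (Fin 2) (Fin 2) ℂ :=
    (-(Complex.I * T / 2)) • ((δ : ℂ) • σz + (A₀ : ℂ) • σx) with hAdef
  have hΩne : (Ω : ℂ) ≠ 0 := by exact_mod_cast hΩpos.ne'
  rcases eq_or_lt_of_le hT with hT0 | hTpos
  · -- T = 0
    have hT0' : T = 0 := hT0.symm
    subst hT0'
    have hA0 : A = 0 := by rw [hAdef]; push_cast; simp
    rw [hU, hA0, NormedSpace.exp_zero]
    simp [Matrix.one_apply]
  · -- T > 0
    set z : ℂ := -(Complex.I * T / 2) * Ω with hzdef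
    have hzne : z ≠ 0 := by
      rw [hzdef]
      apply mul_ne_zero
      · simp only [neg_ne_zero, div_ne_zero_iff]
        constructor
        · exact mul_ne_zero Complex.I_ne_zero (by exact_mod_cast hTpos.ne')
        · norm_num
      · exact_mod_cast hΩpos.ne'
    have hHsq : ((δ : ℂ) • σz + (A₀ : ℂ) • σx) * ((δ : ℂ) • σz + (A₀ : ℂ) • σx)
        = ((δ : ℂ) ^ 2 + (A₀ : ℂ) ^ 2) • (1 : Matrix (Fin 2) (Fin 2) ℂ) := by
      show (_ : Matrix (Fin 2) (Fin 2) ℂ) = _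
      ext i j
      fin_cases i <;> fin_cases j <;>
        simp [σx, σz, Matrix.mul_apply, Fin.sum_univ_two, Matrix.one_apply] <;> ring
    have hAsq : A * A = z ^ 2 • (1 : Matrix (Fin 2) (Fin 2) ℂ) := by
      rw [hAdef, Matrix.smul_mul, Matrix.mul_smul, smul_smul, hHsq, smul_smul, hzdef]
      congr 1
      have hΩ2 : ((Ω : ℂ)) ^ 2 = (δ : ℂ) ^ 2 + (A₀ : ℂ) ^ 2 := by
        exact_mod_cast congrArg (fun x : ℝ => (x : ℂ)) hΩsq
      rw [mul_pow, hΩ2]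
      ring
    have hexp := exp_of_sq_s5 A z hzne hAsq
    have hU10 : U 1 0 = (Complex.sinh z / z) * (-(Complex.I * T / 2) * A₀) := by
      rw [hU, hexp]
      have h1 : (1 : Matrix (Fin 2) (Fin 2) ℂ) 1 0 = 0 := by simp [Matrix.one_apply]
      have h2 : A 1 0 = -(Complex.I * T / 2) * A₀ := by
        rw [hAdef]
        simp [σx, σz]
      simp only [Matrix.add_apply, Matrix.smul_apply, h1, h2, smul_eq_mul, mul_zero, zero_add]
    have hfac : (-(Complex.I * T / 2) * (A₀ : ℂ)) = z * ((A₀ : ℂ) / Ω) := by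
      rw [hzdef]
      field_simp
    have hU10' : U 1 0 = Complex.sinh z * ((A₀ : ℂ) / Ω) := by
      rw [hU10, hfac, div_mul_eq_mul_div, mul_left_comm, mul_div_cancel_left₀ _ hzne]
    have hsinh : Complex.sinh z = -(Complex.sin ((T * Ω / 2 : ℝ) : ℂ)) * Complex.I := by
      have : z = ((-(T * Ω / 2) : ℝ) : ℂ) * Complex.I := by
        rw [hzdef]
        push_cast
        ring
      rw [this, Complex.sinh_mul_I]
      simp [Complex.sin_neg]
    have habs : ‖U 1 0‖ = |Real.sin (T * Ω / 2)| * (|A₀| / Ω) := by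
      have habs2 : ‖Complex.sinh z‖ = |Real.sin (T * Ω / 2)| := by
        rw [hsinh, norm_mul, Complex.norm_I, mul_one, norm_neg,
          ← Complex.ofReal_sin, Complex.norm_real, Real.norm_eq_abs]
      rw [hU10', norm_mul, habs2, norm_div, Complex.norm_real, Complex.norm_real,
        Real.norm_eq_abs, Real.norm_eq_abs, abs_of_pos hΩpos]
    rw [habs]
    rw [mul_pow, div_pow, sq_abs, sq_abs, hΩsq]
    have : Real.sin (Ω * T / 2) = Real.sin (T * Ω / 2) := by ring_nf
    rw [this]
    ring
end
end

section
/- First-order Magnus term of the three-level RWA Hamiltonian under the DRAG substitution: let T ≥ 0, Δ ∈ ℝ with Δ ≠ 0, λ ∈ ℝ, let I : ℝ → ℝ be continuously differentiable with I(0) = I(T) = 0, and set Q(t) = −I'(t)/Δ. Define the 3×3 matrix-valued Hamiltonian H(t) = (1/2)·(I(t)·(σ01⁺ + σ01⁻) − Q(t)·(i·σ01⁺ − i·σ01⁻)) + (λ/2)·((I(t) + i·Q(t))·e^{i Δ t}·σ12⁺ + (I(t) − i·Q(t))·e^{−i Δ t}·σ12⁻). Then ∫₀ᵀ H(t) dt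 = (1/2)·(∫₀ᵀ I(t) dt)·(σ01⁺ + σ01⁻); i.e., to first order in the Magnus expansion the evolution is a pure X-rotation in the computational subspace, with no leakage to the state |2⟩ and no residual σ01^y term. -/
noncomputable section

/-- `E j k` is the 3×3 complex matrix whose only nonzero entry is a `1` in row `j`,
column `k`. -/
def E (j k : Fin 3) : Matrix (Fin 3) (Fin 3) ℂ := Matrix.single j k 1

lemma key_osc (s T : ℝ) (hs : s ≠ 0) (I : ℝ → ℝ) (hI : ContDiff ℝ 1 I)
    (hI0 : I 0 = 0) (hIT : I T = 0) :
    ∫ t in (0:ℝ)..T, ((I t : ℂ) - Complex.I * (deriv I t) / s) *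
      Complex.exp (Complex.I * s * t) = 0 := by
  have hs' : (s:ℂ) ≠ 0 := by exact_mod_cast hs
  have hderiv : ∀ t : ℝ, HasDerivAt (fun t : ℝ => (I t : ℂ) * Complex.exp (Complex.I * s * t) * (-Complex.I / s))
      (((I t : ℂ) - Complex.I * (deriv I t) / s) * Complex.exp (Complex.I * s * t)) t := by
    intro t
    have h1 : HasDerivAt (fun t : ℝ => (I t : ℂ)) (((deriv I t : ℝ) : ℂ)) t :=
      ((hI.differentiable one_ne_zero).differentiableAt.hasDerivAt).ofReal_comp
    have h2 : HasDerivAt (fun t : ℝ => Complex.exp (Complex.I * s * t)) (Complex.I * s * Complex.exp (Complex.I * s * t)) t := by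
      have h3 : HasDerivAt (fun t : ℝ => (Complex.I * s) * (t : ℂ)) (Complex.I * s) t := by
        simpa using (Complex.ofRealCLM.hasDerivAt (x := t)).const_mul (Complex.I * s)
      simpa [mul_comm] using h3.cexp
    have := ((h1.mul h2).mul_const (-Complex.I / s))
    convert this using 1
    · rfl
    · rfl
    have hss : (s:ℂ) * (s:ℂ)⁻¹ = 1 := mul_inv_cancel₀ hs'
    have hk : (I t : ℂ) * Complex.exp (Complex.I * s * t) * ((s:ℂ) * (s:ℂ)⁻¹) * (Complex.I * Complex.I)
        = (I t : ℂ) * Complex.exp (Complex.I * s * t) * ((s:ℂ) * (s:ℂ)⁻¹) * (-1) := by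
      rw [Complex.I_mul_I]
    linear_combination (-((I t : ℂ) * Complex.exp (Complex.I * s * t))) * hss + hk
  have hcont : Continuous fun t : ℝ => ((I t : ℂ) - Complex.I * (deriv I t) / s) * Complex.exp (Complex.I * s * t) := by
    have hc1 : Continuous I := hI.continuous
    have hc2 : Continuous (deriv I) := (hI.iterate_deriv' 0 1).continuous
    fun_prop
  have := intervalIntegral.integral_eq_sub_of_hasDerivAt (f := fun t : ℝ => (I t : ℂ) * Complex.exp (Complex.I * s * t) * (-Complex.I / s))
    (fun t _ => hderiv t) (hcont.intervalIntegrable 0 T)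
  rw [this]
  simp [hI0, hIT]

/-- **First-order Magnus term of the three-level RWA Hamiltonian under the DRAG
substitution** `Q = -I'/Δ` with `I(0) = I(T) = 0`: the entrywise integral
`∫₀ᵀ H(t) dt` equals `(1/2)(∫₀ᵀ I(t) dt)(σ01⁺ + σ01⁻)`, a pure X-rotation of the
computational subspace, with no leakage to `|2⟩` and no residual `σ01ʸ` term. -/
theorem drag_first_order_magnus
    (T : ℝ) (hT : 0 ≤ T) (Δ : ℝ) (hΔ : Δ ≠ 0) (lam : ℝ)
    (I : ℝ → ℝ) (hI : ContDiff ℝ 1 I) (hI0 : I 0 = 0) (hIT : I T = 0)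
    (Q : ℝ → ℝ) (hQ : ∀ t : ℝ, Q t = -deriv I t / Δ)
    (H : ℝ → Matrix (Fin 3) (Fin 3) ℂ)
    (hH : ∀ t : ℝ, H t =
      (1 / 2 : ℂ) • ((I t : ℂ) • (E 1 0 + E 0 1) -
          (Q t : ℂ) • (Complex.I • E 1 0 - Complex.I • E 0 1)) +
        ((lam : ℂ) / 2) •
          ((((I t : ℂ) + Complex.I * (Q t : ℂ)) * Complex.exp (Complex.I * Δ * t)) • E 2 1 +
            (((I t : ℂ) - Complex.I * (Q t : ℂ)) * Complex.exp (-(Complex.I * Δ * t))) • E 1 2)) :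
    (Matrix.of fun i j : Fin 3 => ∫ t in (0 : ℝ)..T, H t i j) =
      ((1 / 2 : ℂ) * ((∫ t in (0 : ℝ)..T, I t : ℝ) : ℂ)) • (E 1 0 + E 0 1) := by
  have hcI : Continuous I := hI.continuous
  have hcD : Continuous (deriv I) := (hI.iterate_deriv' 0 1).continuous
  have hQfun : Q = fun t => -deriv I t / Δ := funext hQ
  have hcQ : Continuous Q := by rw [hQfun]; fun_prop
  -- ∫ Q = 0
  have hQint0 : (∫ t in (0:ℝ)..T, Q t) = 0 := by
    rw [hQfun]
    have : (∫ t in (0:ℝ)..T, -deriv I t / Δ) = -(∫ t in (0:ℝ)..T, deriv I t) / Δ := by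
      rw [intervalIntegral.integral_div, intervalIntegral.integral_neg]
    rw [this, intervalIntegral.integral_deriv_eq_sub
      (fun t _ => (hI.differentiable one_ne_zero).differentiableAt)
      (hcD.intervalIntegrable 0 T)]
    simp [hI0, hIT]
  have hIintC : (∫ t in (0:ℝ)..T, ((I t : ℝ) : ℂ)) = ((∫ t in (0:ℝ)..T, I t : ℝ) : ℂ) :=
    intervalIntegral.integral_ofReal
  have hQintC : (∫ t in (0:ℝ)..T, ((Q t : ℝ) : ℂ)) = 0 := by
    rw [intervalIntegral.integral_ofReal, hQint0, Complex.ofReal_zero]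
  -- oscillatory integrals vanish
  have osc1 : (∫ t in (0:ℝ)..T, ((I t : ℂ) + Complex.I * (Q t : ℂ)) *
      Complex.exp (Complex.I * Δ * t)) = 0 := by
    rw [← key_osc Δ T hΔ I hI hI0 hIT]
    apply intervalIntegral.integral_congr
    intro t _
    simp only [hQ]
    push_cast
    ring
  have osc2 : (∫ t in (0:ℝ)..T, ((I t : ℂ) - Complex.I * (Q t : ℂ)) *
      Complex.exp (-(Complex.I * Δ * t))) = 0 := by
    rw [← key_osc (-Δ) T (neg_ne_zero.mpr hΔ) I hI hI0 hIT]
    apply intervalIntegral.integral_congr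
    intro t _
    simp only [hQ]
    push_cast
    have hΔ' : (Δ : ℂ) ≠ 0 := by exact_mod_cast hΔ
    rw [show Complex.I * (-(Δ:ℂ)) * (t:ℂ) = -(Complex.I * Δ * t) by ring, div_neg, neg_div]
    ring
  have hintI : IntervalIntegrable (fun t => ((I t : ℝ) : ℂ)) MeasureTheory.volume 0 T :=
    (Complex.continuous_ofReal.comp hcI).intervalIntegrable 0 T
  have hintQ : IntervalIntegrable (fun t => ((Q t : ℝ) : ℂ)) MeasureTheory.volume 0 T :=
    (Complex.continuous_ofReal.comp hcQ).intervalIntegrable 0 T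
  ext i j
  rw [Matrix.of_apply]
  fin_cases i <;> fin_cases j <;>
    simp only [hH, E, Matrix.single, Matrix.of_apply, Matrix.add_apply,
      Matrix.sub_apply, Matrix.smul_apply, smul_eq_mul, Matrix.smul_of] <;>
    norm_num [Fin.ext_iff]
  · rw [intervalIntegral.integral_add hintI (hintQ.mul_const Complex.I),
      intervalIntegral.integral_mul_const, hQintC, hIintC]
    ring
  · rw [intervalIntegral.integral_sub hintI (hintQ.mul_const Complex.I),
      intervalIntegral.integral_mul_const, hQintC, hIintC]
    ring
  · exact Or.inr osc2
  · exact Or.inr osc1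
end
end

section
/- Second-order leakage channel couples only the ground and leakage states: let I, Q : ℝ → ℝ, let λ, Δ ∈ ℝ, set f(t) = I(t) + i·Q(t), and define the 3×3 matrices H01(t) = (1/2)·(I(t)·(σ01⁺ + σ01⁻) − Q(t)·(i·σ01⁺ − i·σ01⁻)) and H12(t) = (λ/2)·(f(t)·e^{i Δ t}·σ12⁺ + conj(f(t))·e^{−i Δ t}·σ12⁻). Then for all t₁, t₂ ∈ ℝ there exist complex numbers r and s such that [H01(t₁), H12(t₂)] + [H12(t₁), H01(t₂)] = r·σ02⁺ + s·σ02⁻, where σ02⁺ = E_{20} and σ02⁻ = E_{02}; i.e., the cross terms of the second-order Magnus expansion act only between the states |0⟩ and |2⟩. -/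
noncomputable section

/-- **Second-order leakage channel couples only the ground and leakage states**: for
`H01(t) = (1/2)(I(t)(σ01⁺ + σ01⁻) - Q(t)(iσ01⁺ - iσ01⁻))` and
`H12(t) = (λ/2)(f(t)e^{iΔt} σ12⁺ + conj(f(t))e^{-iΔt} σ12⁻)` with `f = I + iQ`,
the cross terms `[H01(t₁), H12(t₂)] + [H12(t₁), H01(t₂)]` are a combination
`r·σ02⁺ + s·σ02⁻` of the operators `σ02⁺ = E₂₀` and `σ02⁻ = E₀₂` only. -/
theorem second_order_leakage_channel
    (I Q : ℝ → ℝ) (lam Δ : ℝ)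
    (f : ℝ → ℂ) (hf : ∀ t : ℝ, f t = (I t : ℂ) + Complex.I * (Q t : ℂ))
    (H01 H12 : ℝ → Matrix (Fin 3) (Fin 3) ℂ)
    (hH01 : ∀ t : ℝ, H01 t =
      (1 / 2 : ℂ) • ((I t : ℂ) • (E 1 0 + E 0 1) -
        (Q t : ℂ) • (Complex.I • E 1 0 - Complex.I • E 0 1)))
    (hH12 : ∀ t : ℝ, H12 t =
      ((lam : ℂ) / 2) •
        ((f t * Complex.exp (Complex.I * Δ * t)) • E 2 1 +
          ((starRingEnd ℂ) (f t) * Complex.exp (-(Complex.I * Δ * t))) • E 1 2)) :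
    ∀ t₁ t₂ : ℝ, ∃ r s : ℂ,
      (H01 t₁ * H12 t₂ - H12 t₂ * H01 t₁) + (H12 t₁ * H01 t₂ - H01 t₂ * H12 t₁) =
        r • E 2 0 + s • E 0 2 := by
  intro t₁ t₂
  have key : ∀ a b c d : ℂ,
      (a • E 1 0 + b • E 0 1) * (c • E 2 1 + d • E 1 2) -
        (c • E 2 1 + d • E 1 2) * (a • E 1 0 + b • E 0 1) =
      (-(c * a)) • E 2 0 + (b * d) • E 0 2 := by
    intro a b c d
    ext i j
    fin_cases i <;> fin_cases j <;>
      simp [E, Matrix.mul_apply, Matrix.single, Fin.sum_univ_three] <;> ring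
  have key2 : ∀ a b c d : ℂ,
      (c • E 2 1 + d • E 1 2) * (a • E 1 0 + b • E 0 1) -
        (a • E 1 0 + b • E 0 1) * (c • E 2 1 + d • E 1 2) =
      (c * a) • E 2 0 + (-(b * d)) • E 0 2 := by
    intro a b c d
    ext i j
    fin_cases i <;> fin_cases j <;>
      simp [E, Matrix.mul_apply, Matrix.single, Fin.sum_univ_three] <;> ring
  have h01 : ∀ t : ℝ, H01 t =
      (((I t : ℂ) - Complex.I * (Q t : ℂ)) / 2) • E 1 0 +
      (((I t : ℂ) + Complex.I * (Q t : ℂ)) / 2) • E 0 1 := by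
    intro t; rw [hH01 t]; module
  have h12 : ∀ t : ℝ, H12 t =
      (((lam : ℂ) / 2) * (f t * Complex.exp (Complex.I * Δ * t))) • E 2 1 +
      (((lam : ℂ) / 2) * ((starRingEnd ℂ) (f t) * Complex.exp (-(Complex.I * Δ * t)))) • E 1 2 := by
    intro t; rw [hH12 t]; module
  rw [h01 t₁, h01 t₂, h12 t₁, h12 t₂, key, key2]
  refine ⟨-((lam : ℂ) / 2 * (f t₂ * Complex.exp (Complex.I * Δ * t₂)) *
        (((I t₁ : ℂ) - Complex.I * (Q t₁ : ℂ)) / 2)) +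
      (lam : ℂ) / 2 * (f t₁ * Complex.exp (Complex.I * Δ * t₁)) *
        (((I t₂ : ℂ) - Complex.I * (Q t₂ : ℂ)) / 2),
    ((I t₁ : ℂ) + Complex.I * (Q t₁ : ℂ)) / 2 *
        ((lam : ℂ) / 2 * ((starRingEnd ℂ) (f t₂) * Complex.exp (-(Complex.I * Δ * t₂)))) +
      -(((I t₂ : ℂ) + Complex.I * (Q t₂ : ℂ)) / 2 *
        ((lam : ℂ) / 2 * ((starRingEnd ℂ) (f t₁) * Complex.exp (-(Complex.I * Δ * t₁))))), ?_⟩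
  module
end
end
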